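/- Let G be a locally elliptic t.d.l.c. group, p a prime, and k ≥ 1. Suppose there exist open subgroups V ≤ U of G such that the index [U:V] is finite and divisible by p^k. Then there exist compact open subgroups V' ≤ U' of G such that [U':V'] (which is automatically finite) is divisible by p^k. -/

import Mathlib

/-- A topological group is locally elliptic if every compact subset is contained in a
compact subgroup. -/
def IsLocallyElliptic (G : Type*) [Group G] [TopologicalSpace G] : Prop :=
  ∀ K : Set G, IsCompact K → ∃ H : Subgroup G, IsCompact (H : Set G) ∧ K ⊆ (H : Set G)


/-- If `H` contains a set of representatives for the cosets of `V` in `U`, then intersecting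
both `V` and `U` with `H` does not change the relative index. -/
theorem relindex_inf_eq_of_out_mem {G : Type*} [Group G] (U V H : Subgroup G)
    (hS : ∀ q : U ⧸ V.subgroupOf U, ((Quotient.out q : U) : G) ∈ H) :
    (V ⊓ H).relIndex (U ⊓ H) = V.relIndex U := by
  unfold Subgroup.relIndex Subgroup.index
  apply Nat.card_eq_of_bijective (Quotient.map' (fun x => ⟨(x : G), (Subgroup.mem_inf.mp x.2).1⟩)
    (by
      intro a b hab
      rw [QuotientGroup.leftRel_apply] at hab ⊢
      exact hab.1))
  constructor
  · refine Quotient.ind₂' ?_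
    intro a b hab
    rw [Quotient.map'_mk'', Quotient.map'_mk'', Quotient.eq''] at hab
    rw [Quotient.eq'']
    rw [QuotientGroup.leftRel_apply] at hab ⊢
    refine ⟨hab, ?_⟩
    have haH : (a : G) ∈ H := (Subgroup.mem_inf.mp a.2).2
    have hbH : (b : G) ∈ H := (Subgroup.mem_inf.mp b.2).2
    show ((a : G))⁻¹ * (b : G) ∈ H
    exact mul_mem (inv_mem haH) hbH
  · intro q
    set u := Quotient.out q with hu
    refine ⟨Quotient.mk'' ⟨(u : G), Subgroup.mem_inf.mpr ⟨u.2, hS q⟩⟩, ?_⟩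
    rw [Quotient.map'_mk'']
    have : (⟨((⟨(u : G), Subgroup.mem_inf.mpr ⟨u.2, hS q⟩⟩ : (U ⊓ H : Subgroup G)) : G), u.2⟩ : U)
        = u := rfl
    rw [this, hu]
    exact Quotient.out_eq' q

/-- In a locally elliptic t.d.l.c. group, if some pair of open subgroups
`V ≤ U` has finite index divisible by `p^k`, then such a pair may be found with `U`, `V`
compact open. -/
theorem compact_open_witness_of_divisible_index
    (G : Type*) [Group G] [TopologicalSpace G] [IsTopologicalGroup G]
    [LocallyCompactSpace G] [TotallyDisconnectedSpace G] [T2Space G]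
    (hle : IsLocallyElliptic G) (p k : ℕ) (hp : p.Prime) (hk : 1 ≤ k)
    (U V : Subgroup G) (hU : IsOpen (U : Set G)) (hV : IsOpen (V : Set G)) (hVU : V ≤ U)
    (hfin : V.relIndex U ≠ 0) (hdvd : p ^ k ∣ V.relIndex U) :
    ∃ U' V' : Subgroup G, IsCompact (U' : Set G) ∧ IsOpen (U' : Set G) ∧
      IsCompact (V' : Set G) ∧ IsOpen (V' : Set G) ∧ V' ≤ U' ∧
      V'.relIndex U' ≠ 0 ∧ p ^ k ∣ V'.relIndex U' := by
  -- The quotient `U ⧸ V.subgroupOf U` is finite.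
  have hfinq : Finite (U ⧸ V.subgroupOf U) :=
    (Nat.card_ne_zero.mp hfin).2
  -- A finite set of coset representatives.
  set S : Set G := Set.range (fun q : U ⧸ V.subgroupOf U => ((Quotient.out q : U) : G)) with hSdef
  have hScompact : IsCompact S := (Set.finite_range _).isCompact
  -- A compact neighbourhood of 1.
  obtain ⟨K, hKcompact, hKnhds⟩ := exists_compact_mem_nhds (1 : G)
  -- A compact subgroup containing both.
  obtain ⟨H, hHcompact, hHsub⟩ := hle (S ∪ K) (hScompact.union hKcompact)
  -- `H` is open since it is a neighbourhood of 1.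
  have hHopen : IsOpen (H : Set G) :=
    Subgroup.isOpen_of_mem_nhds H (Filter.mem_of_superset hKnhds
      (fun x hx => hHsub (Or.inr hx)))
  have hHclosedU : IsClosed (U : Set G) := U.isClosed_of_isOpen hU
  have hHclosedV : IsClosed (V : Set G) := V.isClosed_of_isOpen hV
  refine ⟨U ⊓ H, V ⊓ H, ?_, ?_, ?_, ?_, ?_, ?_, ?_⟩
  · rw [Subgroup.coe_inf]
    exact hHcompact.inter_left hHclosedU
  · rw [Subgroup.coe_inf]
    exact hU.inter hHopen
  · rw [Subgroup.coe_inf]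
    exact hHcompact.inter_left hHclosedV
  · rw [Subgroup.coe_inf]
    exact hV.inter hHopen
  · exact inf_le_inf_right H hVU
  · rw [relindex_inf_eq_of_out_mem U V H (fun q => hHsub (Or.inl ⟨q, rfl⟩))]
    exact hfin
  · rw [relindex_inf_eq_of_out_mem U V H (fun q => hHsub (Or.inl ⟨q, rfl⟩))]
    exact hdvd
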